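/- For every b ∈ C with q(b) ≠ 0 there exists a unique vertex lattice Λ_b of type 0 such that π^{−ord_{π₀}(q(b))}·b ∈ Λ_b \ πΛ_b. -/

import Mathlib

noncomputable section

attribute [local instance] Classical.propDecidable

variable {F : Type} [Field F]

/-- Membership in the valuation ring `O_F = {x : F | x = 0 ∨ v x ≥ 0}`. -/
def inO (v : F → ℤ) (x : F) : Prop := x = 0 ∨ 0 ≤ v x

/-- The Hermitian form `h(x, y) = x₁ · σ(y₂) + x₂ · σ(y₁)` on `C = F²`. -/
def herm (σ : F →+* F) (x y : F × F) : F := x.1 * σ y.2 + x.2 * σ y.1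

/-- The `O_F`-span of two vectors of `C = F²`. -/
def spanL (v : F → ℤ) (u w : F × F) : Set (F × F) :=
  {x | ∃ a b : F, inO v a ∧ inO v b ∧ x = a • u + b • w}

/-- An `O_F`-lattice in `C`: a free rank-2 `O_F`-submodule spanning `C` over `F`. -/
def IsLattice (v : F → ℤ) (Λ : Set (F × F)) : Prop :=
  ∃ u w : F × F, LinearIndependent F ![u, w] ∧ Λ = spanL v u w

/-- The dual lattice `Λ^♯ = {x ∈ C | h(x, Λ) ⊆ O_F}`. -/
def dualL (σ : F →+* F) (v : F → ℤ) (Λ : Set (F × F)) : Set (F × F) :=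
  {x | ∀ y ∈ Λ, inO v (herm σ x y)}

/-- A vertex lattice of type 0: a self-dual lattice. -/
def IsVertex0 (σ : F →+* F) (v : F → ℤ) (Λ : Set (F × F)) : Prop :=
  IsLattice v Λ ∧ dualL σ v Λ = Λ

/-- A vertex lattice of type 2: a lattice with `Λ^♯ = π Λ`
(equivalently `πΛ ⊆ Λ^♯ ⊆ Λ` with `Λ/Λ^♯` two-dimensional over the residue field). -/
def IsVertex2 (σ : F →+* F) (π : F) (v : F → ℤ) (Λ : Set (F × F)) : Prop :=
  IsLattice v Λ ∧ dualL σ v Λ = (fun x => π • x) '' Λ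

/-- A vertex lattice (of type 0 or type 2). -/
def IsVertex (σ : F →+* F) (π : F) (v : F → ℤ) (Λ : Set (F × F)) : Prop :=
  IsVertex0 σ v Λ ∨ IsVertex2 σ π v Λ

/-- `nIs π b Λ n` says that `n = n(b, Λ)` is the largest integer `m` with `π⁻ᵐ b ∈ Λ`. -/
def nIs (π : F) (b : F × F) (Λ : Set (F × F)) (n : ℤ) : Prop :=
  IsGreatest {m : ℤ | (π ^ (-m)) • b ∈ Λ} n

/-- Adjacency of type-2 vertex lattices: distinct, with intersection a type-0 vertex lattice. -/
def AdjV (σ : F →+* F) (π : F) (v : F → ℤ) (Λ Λ' : Set (F × F)) : Prop :=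
  IsVertex2 σ π v Λ ∧ IsVertex2 σ π v Λ' ∧ Λ ≠ Λ' ∧ IsVertex0 σ v (Λ ∩ Λ')

/-- There is a walk of length `k` between `Λ` and `Λ'` in the Bruhat–Tits tree. -/
def WalkN (σ : F →+* F) (π : F) (v : F → ℤ) (k : ℕ) (Λ Λ' : Set (F × F)) : Prop :=
  ∃ f : ℕ → Set (F × F), f 0 = Λ ∧ f k = Λ' ∧ ∀ i < k, AdjV σ π v (f i) (f (i + 1))

/-- `dGIs σ π v Λ Λ' k` : the graph distance `d_G(Λ, Λ')` equals `k`. -/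
def dGIs (σ : F →+* F) (π : F) (v : F → ℤ) (Λ Λ' : Set (F × F)) (k : ℕ) : Prop :=
  IsLeast {j : ℕ | WalkN σ π v j Λ Λ'} k

/-- `P` is a type-2 "hull" of the vertex lattice `Λ`: `P = Λ` when `Λ` has type 2,
and `P` is a type-2 vertex lattice containing `Λ` when `Λ` has type 0. -/
def HullOf (σ : F →+* F) (π : F) (v : F → ℤ) (Λ P : Set (F × F)) : Prop :=
  (IsVertex2 σ π v Λ ∧ P = Λ) ∨ (IsVertex0 σ v Λ ∧ IsVertex2 σ π v P ∧ Λ ⊆ P)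

/-- `DTwice σ π v Λ Λ' m` : twice the tree distance `D(Λ, Λ')` equals `m`
(type-0 vertex lattices are midpoints of edges, contributing `1/2` each). -/
def DTwice (σ : F →+* F) (π : F) (v : F → ℤ) (Λ Λ' : Set (F × F)) (m : ℕ) : Prop :=
  (Λ = Λ' ∧ m = 0) ∨
  (Λ ≠ Λ' ∧ ∃ k : ℕ,
    IsLeast {j : ℕ | ∃ P Q, HullOf σ π v Λ P ∧ HullOf σ π v Λ' Q ∧ WalkN σ π v j P Q} k ∧
    (m : ℤ) = 2 * k + (if IsVertex0 σ v Λ then 1 else 0) +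
      (if IsVertex0 σ v Λ' then 1 else 0))

/-- `g ∈ GL₂(O_F)`. -/
def InGL2O (v : F → ℤ) (g : Matrix (Fin 2) (Fin 2) F) : Prop :=
  (∀ i j, inO v (g i j)) ∧
    ∃ g' : Matrix (Fin 2) (Fin 2) F, (∀ i j, inO v (g' i j)) ∧ g * g' = 1 ∧ g' * g = 1

/-- Equivalence of Hermitian matrices: `T ≈ T'` iff `gᵗ T ḡ = T'` for some `g ∈ GL₂(O_F)`. -/
def HermEquiv (σ : F →+* F) (v : F → ℤ) (T T' : Matrix (Fin 2) (Fin 2) F) : Prop :=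
  ∃ g, InGL2O v g ∧ g.transpose * T * g.map (fun x => σ x) = T'

/-- `u` is a unit of `O_{F₀}`. -/
def IsUnitO₀ (σ : F →+* F) (v : F → ℤ) (u : F) : Prop :=
  σ u = u ∧ u ≠ 0 ∧ v u = 0

/-- `x` is a norm from `F^×`. -/
def IsNorm (σ : F →+* F) (x : F) : Prop := ∃ y : F, y ≠ 0 ∧ x = y * σ y


theorem statement4
    (σ : F →+* F) (π : F) (v : F → ℤ)
    (hinv : ∀ x, σ (σ x) = x)
    (hσπ : σ π = -π)
    (hπ : π ≠ 0)
    (h2 : (2 : F) ≠ 0)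
    (hvπ : v π = 1)
    (hv2 : v (2 : F) = 0)
    (hvσ : ∀ x, v (σ x) = v x)
    (hvmul : ∀ x y : F, x ≠ 0 → y ≠ 0 → v (x * y) = v x + v y)
    (hvadd : ∀ x y : F, x ≠ 0 → y ≠ 0 → x + y ≠ 0 → min (v x) (v y) ≤ v (x + y))
    (heven : ∀ x : F, σ x = x → x ≠ 0 → Even (v x))
    (b : F × F) (hb : herm σ b b ≠ 0)
    (α : ℤ) (hα : v (herm σ b b) = 2 * α) :
    ∃! Λ : Set (F × F), IsVertex0 σ v Λ ∧
      (π ^ (-α)) • b ∈ Λ ∧ (π ^ (-α)) • b ∉ (fun x => π • x) '' Λ := by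

  classical
  -- basic valuation facts
  have hv1 : v 1 = 0 := by
    have h := hvmul 1 1 one_ne_zero one_ne_zero
    rw [mul_one] at h; omega
  have hvinv : ∀ x : F, x ≠ 0 → v x⁻¹ = - v x := by
    intro x hx
    have h := hvmul x x⁻¹ hx (inv_ne_zero hx)
    rw [mul_inv_cancel₀ hx, hv1] at h; omega
  have hvneg : ∀ x : F, x ≠ 0 → v (-x) = v x := by
    intro x hx
    have hn1 : (-1 : F) ≠ 0 := neg_ne_zero.2 one_ne_zero
    have h1 := hvmul (-1) (-1) hn1 hn1
    rw [neg_mul_neg, one_mul, hv1] at h1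
    have h := hvmul (-1) x hn1 hx
    rw [neg_one_mul] at h; omega
  have hvnat : ∀ n : ℕ, v (π ^ n) = n := by
    intro n
    induction n with
    | zero => simpa using hv1
    | succ n ih =>
      have h := hvmul (π ^ n) π (pow_ne_zero n hπ) hπ
      rw [← pow_succ, ih, hvπ] at h
      rw [h]; push_cast; ring
  have hvzpow : ∀ n : ℤ, v (π ^ n) = n := by
    intro n
    rcases n with n | n
    · simpa using hvnat n
    · rw [zpow_negSucc, hvinv _ (pow_ne_zero _ hπ), hvnat]
      simp [Int.negSucc_eq]
  -- closure properties of O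
  have o1 : inO v (1 : F) := Or.inr hv1.ge
  have omul : ∀ a c : F, inO v a → inO v c → inO v (a * c) := by
    intro a c ha hc
    by_cases h0 : a = 0; · left; simp [h0]
    by_cases h1 : c = 0; · left; simp [h1]
    right; rw [hvmul a c h0 h1]
    exact add_nonneg (ha.resolve_left h0) (hc.resolve_left h1)
  have oneg : ∀ a : F, inO v a → inO v (-a) := by
    intro a ha
    by_cases h0 : a = 0; · left; simp [h0]
    right; rw [hvneg a h0]; exact ha.resolve_left h0
  have oadd : ∀ a c : F, inO v a → inO v c → inO v (a + c) := by
    intro a c ha hc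
    by_cases h0 : a = 0; · simpa [h0] using hc
    by_cases h1 : c = 0; · simpa [h1] using ha
    by_cases hs : a + c = 0; · exact Or.inl hs
    have hm := hvadd a c h0 h1 hs
    have ha' := ha.resolve_left h0
    have hc' := hc.resolve_left h1
    right; omega
  have osub : ∀ a c : F, inO v a → inO v c → inO v (a - c) := by
    intro a c ha hc
    rw [sub_eq_add_neg]; exact oadd _ _ ha (oneg _ hc)
  have hσ0 : ∀ x : F, σ x = 0 → x = 0 := by
    intro x hx
    have h := hinv x
    rw [hx, map_zero] at h; exact h.symm
  have oσ : ∀ a : F, inO v a → inO v (σ a) := by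
    intro a ha
    rcases ha with h | h
    · left; rw [h, map_zero]
    · right; rw [hvσ]; exact h
  -- the rescaled vector
  set b' : F × F := (π ^ (-α)) • b with hb'def
  have hcne : (π : F) ^ (-α) ≠ 0 := zpow_ne_zero _ hπ
  have hσc : σ (π ^ (-α)) = (-π) ^ (-α) := by rw [map_zpow₀, hσπ]
  have hσcne : σ (π ^ (-α)) ≠ 0 := by rw [hσc]; exact zpow_ne_zero _ (neg_ne_zero.2 hπ)
  have hvc : v (π ^ (-α)) = -α := hvzpow _
  have hvσc : v (σ (π ^ (-α))) = -α := by rw [hvσ]; exact hvzpow _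
  have hcomp : herm σ b' b' = (π ^ (-α) * σ (π ^ (-α))) * herm σ b b := by
    simp only [hb'def, herm, Prod.smul_fst, Prod.smul_snd, smul_eq_mul, map_mul]
    ring
  set u : F := herm σ b' b' with hudef
  have hune : u ≠ 0 := by
    rw [hcomp]
    exact mul_ne_zero (mul_ne_zero hcne hσcne) hb
  have hvu : v u = 0 := by
    have h1 := hvmul (π ^ (-α) * σ (π ^ (-α))) (herm σ b b) (mul_ne_zero hcne hσcne) hb
    have h2 := hvmul (π ^ (-α)) (σ (π ^ (-α))) hcne hσcne
    rw [hcomp, h1, h2, hvc, hvσc, hα]; ring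
  have hou : inO v u := Or.inr hvu.ge
  have houinv : inO v u⁻¹ := Or.inr (by rw [hvinv u hune, hvu]; norm_num)
  -- the orthogonal vector
  set w : F × F := (σ b'.1, - σ b'.2) with hwdef
  -- the pairing formula
  have hpair : ∀ a c a' c' : F,
      herm σ (a • b' + c • w) (a' • b' + c' • w) = (a * σ a' - c * σ c') * u := by
    intro a c a' c'
    simp only [hudef, hwdef, herm, Prod.fst_add, Prod.snd_add, Prod.smul_fst, Prod.smul_snd,
      smul_eq_mul, Prod.fst, Prod.snd, map_add, map_mul, map_neg, mul_neg, hinv]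
    ring
  have hpairb : ∀ a c : F, herm σ (a • b' + c • w) b' = a * u := by
    intro a c
    have h := hpair a c 1 0
    simpa using h
  have hpairw : ∀ a c : F, herm σ (a • b' + c • w) w = -(c * u) := by
    intro a c
    have h := hpair a c 0 1
    simpa using h
  have hune' : b'.1 * σ b'.2 + b'.2 * σ b'.1 ≠ 0 := hune
  -- decomposition of an arbitrary vector
  have hdecomp : ∀ x : F × F,
      x = (herm σ x b' * u⁻¹) • b' + (-(herm σ x w) * u⁻¹) • w := by
    intro x
    have hx1 : x.1 = (herm σ x b' * u⁻¹) * b'.1 + (-(herm σ x w) * u⁻¹) * (σ b'.1) := by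
      rw [hudef]
      simp only [hwdef, herm, map_add, map_mul, map_neg, hinv]
      have hD : σ b'.2 * b'.1 + σ b'.1 * b'.2 ≠ 0 := by
        rw [mul_comm (σ b'.2), mul_comm (σ b'.1)]; exact hune'
      field_simp
      ring
    have hx2 : x.2 = (herm σ x b' * u⁻¹) * b'.2 + (-(herm σ x w) * u⁻¹) * (- σ b'.2) := by
      rw [hudef]
      simp only [hwdef, herm, map_add, map_mul, map_neg, hinv]
      have hD : σ b'.2 * b'.1 + σ b'.1 * b'.2 ≠ 0 := by
        rw [mul_comm (σ b'.2), mul_comm (σ b'.1)]; exact hune'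
      field_simp
      ring
    exact Prod.ext hx1 hx2
  -- membership criterion for the span
  have hmemΛ : ∀ x : F × F, inO v (herm σ x b') → inO v (herm σ x w) →
      x ∈ spanL v b' w := by
    intro x h1 h2
    exact ⟨herm σ x b' * u⁻¹, -(herm σ x w) * u⁻¹,
      omul _ _ h1 houinv, omul _ _ (oneg _ h2) houinv, hdecomp x⟩
  -- linear independence
  have hindep : LinearIndependent F ![b', w] := by
    rw [LinearIndependent.pair_iff]
    intro s t hst
    have e1 := hpairb s t
    have e2 := hpairw s t
    rw [hst] at e1 e2
    have hz : herm σ (0 : F × F) b' = 0 := by simp [herm]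
    have hz2 : herm σ (0 : F × F) w = 0 := by simp [herm]
    rw [hz] at e1; rw [hz2] at e2
    constructor
    · rcases mul_eq_zero.1 e1.symm with h | h
      · exact h
      · exact absurd h hune
    · rcases mul_eq_zero.1 (neg_eq_zero.mp e2.symm) with h | h
      · exact h
      · exact absurd h hune
  have hb'mem : b' ∈ spanL v b' w := ⟨1, 0, o1, Or.inl rfl, by module⟩
  have hwmem : w ∈ spanL v b' w := ⟨0, 1, Or.inl rfl, o1, by module⟩
  -- self-duality
  have hself : dualL σ v (spanL v b' w) = spanL v b' w := by
    apply Set.Subset.antisymm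
    · intro x hx
      exact hmemΛ x (hx b' hb'mem) (hx w hwmem)
    · rintro x ⟨a, c, ha, hc, rfl⟩ y ⟨a', c', ha', hc', rfl⟩
      rw [hpair]
      exact omul _ _ (osub _ _ (omul _ _ ha (oσ _ ha')) (omul _ _ hc (oσ _ hc'))) hou
  -- primitivity
  have hnotin : b' ∉ (fun x => π • x) '' spanL v b' w := by
    rintro ⟨z, ⟨a, c, ha, hc, rfl⟩, hz⟩
    have hz' : π • (a • b' + c • w) = b' := hz
    have e := hpairb (π * a) (π * c)
    rw [show (π * a) • b' + (π * c) • w = π • (a • b' + c • w) from by module, hz',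
      ← hudef] at e
    -- e : u = π * a * u
    have hπa : π * a = 1 := by
      have := mul_right_cancel₀ hune (by rw [← e, one_mul] : (π * a) * u = 1 * u)
      exact this
    have hane : a ≠ 0 := by
      intro h; rw [h, mul_zero] at hπa; exact one_ne_zero hπa.symm
    have hva : v a = -1 := by
      have h := hvmul π a hπ hane
      rw [hπa, hv1, hvπ] at h; omega
    rcases ha with h | h
    · exact hane h
    · omega
  -- assemble
  refine ⟨spanL v b' w, ⟨⟨⟨b', w, hindep, rfl⟩, hself⟩, hb'mem, hnotin⟩, ?_⟩
  rintro Λ' ⟨⟨hlat', hdual'⟩, hmem', -⟩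
  obtain ⟨u₁, u₂, -, hspan'⟩ := hlat'
  have hsub : Λ' ⊆ spanL v b' w := by
    intro x hx
    have hxdual : x ∈ dualL σ v Λ' := by rw [hdual']; exact hx
    have hh1 : inO v (herm σ x b') := hxdual b' hmem'
    have hoa : inO v (herm σ x b' * u⁻¹) := omul _ _ hh1 houinv
    set a : F := herm σ x b' * u⁻¹ with hadef
    set c : F := -(herm σ x w) * u⁻¹ with hcdef
    have hxd : x = a • b' + c • w := hdecomp x
    have hyΛ' : x - a • b' ∈ Λ' := by
      rw [hspan'] at hx hmem' ⊢
      obtain ⟨p, q2, hp, hq, hxe⟩ := hx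
      obtain ⟨r, s, hr, hs, hbrs⟩ := hmem'
      exact ⟨p - a * r, q2 - a * s,
        osub _ _ hp (omul _ _ hoa hr), osub _ _ hq (omul _ _ hoa hs),
        by rw [hxe, hbrs]; module⟩
    have hyc : x - a • b' = c • w := by rw [hxd]; module
    rw [hyc] at hyΛ'
    have hind : inO v (herm σ (c • w) (c • w)) := by
      have hdd : c • w ∈ dualL σ v Λ' := by rw [hdual']; exact hyΛ'
      exact hdd (c • w) hyΛ'
    have hpw : herm σ (c • w) (c • w) = -(c * σ c) * u := by
      have h := hpair 0 c 0 c
      simp only [zero_smul, zero_add, map_zero, zero_mul, zero_sub] at h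
      exact h
    have hocc : inO v c := by
      by_cases h0 : c = 0; · exact Or.inl h0
      have hσcc : σ c ≠ 0 := fun h => h0 (hσ0 _ h)
      right
      rw [hpw, neg_mul] at hind
      have hne : c * σ c * u ≠ 0 := mul_ne_zero (mul_ne_zero h0 hσcc) hune
      rcases hind with h | h
      · exact absurd (neg_eq_zero.1 h) hne
      · rw [hvneg _ hne, hvmul _ _ (mul_ne_zero h0 hσcc) hune,
          hvmul _ _ h0 hσcc, hvσ, hvu] at h
        omega
    exact ⟨a, c, hoa, hocc, hxd⟩
  refine Set.Subset.antisymm hsub ?_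
  intro x hx
  rw [← hdual']
  intro y hy
  have hx' : x ∈ dualL σ v (spanL v b' w) := by rw [hself]; exact hx
  exact hx' y (hsub hy)
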